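/- Let X be an ultrametrizable topological space and A a nonempty closed subset of X. Then every continuous map f : A → Y into an arbitrary topological space Y extends to a continuous map F : X → Y with F|_A = f. -/
import Mathlib

open Metric

/-- Key lemma: if `x ∉ A` and `y` lies in the ball `B(x, infDist x A)`, then
`infDist y A = infDist x A`. -/
lemma stmt13_aux {X : Type*} [MetricSpace X] [IsUltrametricDist X]
    {A : Set X} (hAne : A.Nonempty) {x y : X}
    (hy : y ∈ ball x (infDist x A)) : infDist y A = infDist x A := by
  have hxy : dist x y < infDist x A := by rwa [mem_ball'] at hy
  apply le_antisymm
  · by_contra h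
    push_neg at h
    obtain ⟨a, ha, hd⟩ := (infDist_lt_iff hAne).mp h
    have h1 : dist y x < infDist x A := by rwa [dist_comm]
    have h2 : infDist x A ≤ dist x a := infDist_le_dist_of_mem ha
    have h3 : infDist y A ≤ dist y a := infDist_le_dist_of_mem ha
    have hle : dist y a ≤ dist x a :=
      le_trans (IsUltrametricDist.dist_triangle_max y x a)
        (max_le (le_of_lt (lt_of_lt_of_le h1 h2)) le_rfl)
    exact absurd hd (not_lt.mpr (le_trans h3 hle))
  · by_contra h
    push_neg at h
    obtain ⟨a, ha, hd⟩ := (infDist_lt_iff hAne).mp h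
    have hxa : dist x a ≤ max (dist x y) (dist y a) := IsUltrametricDist.dist_triangle_max x y a
    have : dist x a < infDist x A :=
      lt_of_le_of_lt hxa (max_lt hxy hd)
    exact absurd (infDist_le_dist_of_mem ha) (not_le.mpr this)

theorem stmt13 (X : Type*) [MetricSpace X] [IsUltrametricDist X]
    (A : Set X) (hA : IsClosed A) (hAne : A.Nonempty)
    (Y : Type*) [TopologicalSpace Y] (f : A → Y) (hf : Continuous f) :
    ∃ F : X → Y, Continuous F ∧ ∀ a : A, F a = f a := by
  classical
  -- distance to A
  set d : X → ℝ := fun x => infDist x A with hd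
  have hdpos : ∀ {x : X}, x ∉ A → 0 < d x := fun {x} hx =>
    (hA.notMem_iff_infDist_pos hAne).mp hx
  -- key lemma: membership in the canonical ball
  have key : ∀ {x y : X}, x ∉ A → y ∈ ball x (d x) →
      y ∉ A ∧ d y = d x ∧ ball y (d y) = ball x (d x) := by
    intro x y hx hy
    have hdy : d y = d x := stmt13_aux hAne hy
    have hyA : y ∉ A := by
      intro hyA
      have : d x ≤ dist x y := infDist_le_dist_of_mem hyA
      rw [mem_ball'] at hy
      exact absurd hy (not_lt.mpr this)
    refine ⟨hyA, hdy, ?_⟩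
    rw [hdy]
    exact (IsUltrametricDist.ball_eq_of_mem hy).symm
  -- choose a near point of `A` for each canonical ball
  have hsel : ∀ B : Set X, ∃ p : A, (∃ x, x ∉ A ∧ ball x (d x) = B) →
      ∀ x, x ∉ A → ball x (d x) = B → dist x (p : X) < 2 * d x := by
    intro B
    by_cases hB : ∃ x, x ∉ A ∧ ball x (d x) = B
    · obtain ⟨x₀, hx₀, hBx₀⟩ := hB
      have hlt : d x₀ < 2 * d x₀ := by have := hdpos hx₀; linarith
      obtain ⟨a, haA, hax⟩ := (infDist_lt_iff hAne).mp hlt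
      refine ⟨⟨a, haA⟩, fun _ x hx hBx => ?_⟩
      -- x's ball equals x₀'s ball, so x ∈ ball x₀ (d x₀)
      have hxmem : x ∈ ball x₀ (d x₀) := by
        rw [hBx₀, ← hBx]
        exact mem_ball_self (hdpos hx)
      obtain ⟨-, hdx, -⟩ := key hx₀ hxmem
      have h1 : dist x x₀ < d x₀ := by rw [mem_ball'] at hxmem; rwa [dist_comm]
      calc dist x a ≤ max (dist x x₀) (dist x₀ a) :=
            IsUltrametricDist.dist_triangle_max x x₀ a
        _ < 2 * d x₀ := max_lt (h1.trans hlt) hax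
        _ = 2 * d x := by rw [hdx]
    · exact ⟨⟨hAne.choose, hAne.choose_spec⟩, fun h => absurd h hB⟩
  choose sel hselspec using hsel
  -- the retraction
  set ρ : X → A := fun x => if hx : x ∈ A then ⟨x, hx⟩ else sel (ball x (d x)) with hρ
  have hρA : ∀ (a : A), ρ a = a := by
    intro a; simp [hρ, a.2]
  have hρnear : ∀ {x : X}, x ∉ A → dist x ((ρ x : A) : X) < 2 * d x := by
    intro x hx
    simp only [hρ, dif_neg hx]
    exact hselspec (ball x (d x)) ⟨x, hx, rfl⟩ x hx rfl
  -- continuity of ρ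
  have hρcont : Continuous ρ := by
    rw [Metric.continuous_iff]
    intro x ε hε
    by_cases hx : x ∈ A
    · refine ⟨ε / 3, by linarith, fun y hy => ?_⟩
      rw [Subtype.dist_eq]
      have hρx : ((ρ x : A) : X) = x := by rw [hρA ⟨x, hx⟩]
      rw [hρx]
      by_cases hyA : y ∈ A
      · have : ((ρ y : A) : X) = y := by rw [hρA ⟨y, hyA⟩]
        rw [this]; linarith
      · have h1 : dist y ((ρ y : A) : X) < 2 * d y := hρnear hyA
        have h2 : d y ≤ dist y x := infDist_le_dist_of_mem hx
        calc dist ((ρ y : A) : X) x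
            ≤ max (dist ((ρ y : A) : X) y) (dist y x) :=
              IsUltrametricDist.dist_triangle_max _ y x
          _ < ε := by
              rw [dist_comm ((ρ y : A) : X) y]
              apply max_lt <;> linarith
    · refine ⟨d x, hdpos hx, fun y hy => ?_⟩
      have hymem : y ∈ ball x (d x) := by rwa [mem_ball]
      obtain ⟨hyA, hdy, hball⟩ := key hx hymem
      have : ρ y = ρ x := by
        simp only [hρ, dif_neg hyA, dif_neg hx, hball]
      rw [this, dist_self]; exact hε
  refine ⟨f ∘ ρ, hf.comp hρcont, fun a => ?_⟩
  simp [Function.comp, hρA a]
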